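/- For all integers s1,…,sl ≥ 1 and r1,…,rl ≥ 0 one has in ℚ⟦q⟧: d [s1,…,sl; r1,…,rl] = ∑_{j=1}^{l} sj·(rj+1)·[s1,…,s_{j−1}, sj+1, s_{j+1},…,sl; r1,…,r_{j−1}, rj+1, r_{j+1},…,rl]. -/

import Mathlib

open Finset

open Classical in
/-- The bi-bracket `[s₁,…,s_l; r₁,…,r_l] ∈ ℚ⟦q⟧`. -/
noncomputable def biBracket {l : ℕ} (s r : Fin l → ℕ) : PowerSeries ℚ :=
  PowerSeries.mk fun n =>
    ∑ u : Fin l → Fin (n + 1), ∑ v : Fin l → Fin (n + 1),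
      if (∀ i j : Fin l, i < j → (u j : ℕ) < (u i : ℕ)) ∧ (∀ j, 0 < (u j : ℕ)) ∧
          (∀ j, 0 < (v j : ℕ)) ∧ (∑ j, (u j : ℕ) * (v j : ℕ)) = n
      then ∏ j, (u j : ℚ) ^ (r j) / (Nat.factorial (r j)) *
            ((v j : ℚ) ^ (s j - 1) / (Nat.factorial (s j - 1)))
      else 0

/-- The operator `d = q·d/dq` on `ℚ⟦q⟧`, sending `∑ aₙ qⁿ` to `∑ n·aₙ qⁿ`. -/
noncomputable def qd (f : PowerSeries ℚ) : PowerSeries ℚ :=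
  PowerSeries.mk fun n => (n : ℚ) * PowerSeries.coeff n f

/-- `d [s₁,…,s_l; r₁,…,r_l] = ∑_{j=1}^{l} s_j·(r_j+1)·[…,s_j+1,…; …,r_j+1,…]`. -/
theorem qd_biBracket {l : ℕ} (s r : Fin l → ℕ) (hs : ∀ j, 1 ≤ s j) :
    qd (biBracket s r) =
      ∑ j : Fin l, ((s j : ℚ) * ((r j : ℚ) + 1)) •
        biBracket (Function.update s j (s j + 1)) (Function.update r j (r j + 1)) := by
  ext n
  simp only [qd, biBracket, PowerSeries.coeff_mk, map_sum, PowerSeries.coeff_smul,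
    smul_eq_mul, Finset.mul_sum]
  conv_rhs => rw [Finset.sum_comm]
  refine Finset.sum_congr rfl fun u _ => ?_
  conv_rhs => rw [Finset.sum_comm]
  refine Finset.sum_congr rfl fun v _ => ?_
  by_cases h : (∀ i j : Fin l, i < j → (u j : ℕ) < (u i : ℕ)) ∧ (∀ j, 0 < (u j : ℕ)) ∧
      (∀ j, 0 < (v j : ℕ)) ∧ (∑ j, (u j : ℕ) * (v j : ℕ)) = n
  · simp only [if_pos h]
    have hn : (n : ℚ) = ∑ j, (u j : ℚ) * (v j : ℚ) := by
      have h4 := h.2.2.2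
      have hc : ((∑ j, (u j : ℕ) * (v j : ℕ) : ℕ) : ℚ) = ∑ j, (u j : ℚ) * (v j : ℚ) := by
        push_cast; rfl
      rw [← hc]
      exact_mod_cast h4.symm
    rw [hn, Finset.sum_mul]
    refine Finset.sum_congr rfl fun j _ => ?_
    rw [← Finset.mul_prod_erase _ _ (Finset.mem_univ j),
        ← Finset.mul_prod_erase _
          (fun k => (u k : ℚ) ^ (Function.update r j (r j + 1) k) /
              (Nat.factorial (Function.update r j (r j + 1) k)) *
            ((v k : ℚ) ^ (Function.update s j (s j + 1) k - 1) /
              (Nat.factorial (Function.update s j (s j + 1) k - 1))))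
          (Finset.mem_univ j)]
    have hprod : ∀ k ∈ Finset.univ.erase j,
        (u k : ℚ) ^ (Function.update r j (r j + 1) k) /
            (Nat.factorial (Function.update r j (r j + 1) k)) *
          ((v k : ℚ) ^ (Function.update s j (s j + 1) k - 1) /
            (Nat.factorial (Function.update s j (s j + 1) k - 1))) =
        (u k : ℚ) ^ (r k) / (Nat.factorial (r k)) *
          ((v k : ℚ) ^ (s k - 1) / (Nat.factorial (s k - 1))) := by
      intro k hk
      rw [Function.update_of_ne (Finset.ne_of_mem_erase hk),
          Function.update_of_ne (Finset.ne_of_mem_erase hk)]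
    rw [Finset.prod_congr rfl hprod]
    simp only [Function.update_self]
    obtain ⟨t, ht⟩ : ∃ t, s j = t + 1 := ⟨s j - 1, (Nat.succ_pred_eq_of_pos (hs j)).symm⟩
    rw [ht]
    have h1 : ((Nat.factorial (r j) : ℚ)) ≠ 0 := Nat.cast_ne_zero.mpr (Nat.factorial_ne_zero _)
    have h2 : ((Nat.factorial t : ℚ)) ≠ 0 := Nat.cast_ne_zero.mpr (Nat.factorial_ne_zero _)
    simp only [Nat.add_sub_cancel]
    push_cast [Nat.factorial_succ, pow_succ]
    field_simp
  · simp only [if_neg h, mul_zero, Finset.sum_const_zero]
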